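/- Let P₁, P₂, P₃ be elements of a complex Banach algebra satisfying [P₁,P₂] + [P₁,P₃] + [P₂,P₃] = 0, set 𝓛 = P₁ + P₂ + P₃, S(t) = exp(tP₁)·exp(tP₂)·exp(tP₃), E(t) = S(t) − exp(t𝓛), and define W(τ) = exp(τP₁)·∫₀^τ exp(ηP₂)·[P₂,P₃]·exp(−ηP₂) dη − (∫₀^τ exp(ηP₁)·[P₂,P₃]·exp(−ηP₁) dη)·exp(τP₁). Then for every real t ≥ 0, E(t) = ∫₀ᵗ exp((t−τ)𝓛)·W(τ)·exp(τP₂)·exp(τP₃) dτ. -/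

import Mathlib

open NormedSpace


section Aux
variable {𝒜 : Type*} [NormedRing 𝒜] [NormedAlgebra ℂ 𝒜] [CompleteSpace 𝒜]

lemma my_csmul (t : ℝ) (A : 𝒜) : (t : ℂ) • A = t • A := by
  rw [← algebraMap_smul ℂ t A]; norm_num

noncomputable def myRatAlg : NormedAlgebra ℚ 𝒜 := NormedAlgebra.restrictScalars ℚ ℂ 𝒜

attribute [local instance] myRatAlg

lemma my_exp_eq : (exp : 𝒜 → 𝒜) = exp := rfl

lemma my_exp_cont (A : 𝒜) : Continuous (fun t : ℝ => exp (t • A)) :=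
  exp_continuous.comp (continuous_id.smul continuous_const)

lemma my_exp_cont_neg (A : 𝒜) : Continuous (fun t : ℝ => exp (-(t • A))) :=
  exp_continuous.comp ((continuous_id.smul continuous_const).neg)

lemma my_exp_deriv (A : 𝒜) (t : ℝ) :
    HasDerivAt (fun u : ℝ => exp (u • A)) (exp (t • A) * A) t :=
  hasDerivAt_exp_smul_const (𝕂 := ℝ) A t

lemma my_exp_deriv' (A : 𝒜) (t : ℝ) :
    HasDerivAt (fun u : ℝ => exp (u • A)) (A * exp (t • A)) t :=
  hasDerivAt_exp_smul_const' (𝕂 := ℝ) A t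

lemma my_exp_deriv_neg (A : 𝒜) (t : ℝ) :
    HasDerivAt (fun u : ℝ => exp (-(u • A))) (exp (-(t • A)) * (-A)) t := by
  simpa only [smul_neg] using hasDerivAt_exp_smul_const (𝕂 := ℝ) (-A) t

lemma my_exp_mul_neg (A : 𝒜) (t : ℝ) : exp (t • A) * exp (-(t • A)) = 1 := by
  rw [← exp_add_of_commute ((Commute.refl (t • A)).neg_right)]
  simp

lemma my_exp_neg_mul (A : 𝒜) (t : ℝ) : exp (-(t • A)) * exp (t • A) = 1 := by
  rw [← exp_add_of_commute ((Commute.refl (t • A)).neg_left)]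
  simp

lemma my_exp_smul_sub (A : 𝒜) (t τ : ℝ) :
    exp (t • A) * exp (-(τ • A)) = exp ((t - τ) • A) := by
  have : exp (t • A) = exp ((t - τ) • A) * exp (τ • A) := by
    rw [← exp_add_of_commute (((Commute.refl A).smul_left (t - τ)).smul_right τ), ← add_smul]
    norm_num
  rw [this, mul_assoc, my_exp_mul_neg, mul_one]

/-- if two functions have the same derivative and agree at 0 they agree. -/
lemma my_eq_of_deriv {f g d : ℝ → 𝒜} (hf : ∀ t, HasDerivAt f (d t) t)
    (hg : ∀ t, HasDerivAt g (d t) t) (h0 : f 0 = g 0) (t : ℝ) : f t = g t := by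
  have h : ∀ x, HasDerivAt (fun u => f u - g u) 0 x := by
    intro x; simpa using (hf x).fun_sub (hg x)
  have hc := is_const_of_deriv_eq_zero (𝕜 := ℝ) (f := fun u => f u - g u)
    (fun x => (h x).differentiableAt) (fun x => (h x).deriv) t 0
  have : f t - g t = f 0 - g 0 := hc
  rw [h0] at this
  have := sub_eq_sub_iff_sub_eq_sub.mp this
  simpa using this

/-- the conjugation integral identity. -/
lemma my_conj_int (A B : 𝒜) (t : ℝ) :
    (∫ η in (0:ℝ)..t, exp (η • A) * (A * B - B * A) * exp (-(η • A))) * exp (t • A)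
      = exp (t • A) * B - B * exp (t • A) := by
  set g : ℝ → 𝒜 := fun η => exp (η • A) * (A * B - B * A) * exp (-(η • A)) with hg
  have hgc : Continuous g := ((my_exp_cont A).mul continuous_const).mul (my_exp_cont_neg A)
  have key : ∀ s : ℝ, (∫ η in (0:ℝ)..s, g η)
      = exp (s • A) * B * exp (-(s • A)) - B := by
    refine my_eq_of_deriv (d := g) (fun s => (hgc.integral_hasStrictDerivAt 0 s).hasDerivAt)
      (fun s => ?_) (by simp) 
    have h := (((my_exp_deriv A s).fun_mul (hasDerivAt_const s B)).fun_mul (my_exp_deriv_neg A s)).fun_sub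
      (hasDerivAt_const s B)
    refine h.congr_deriv ?_
    have cA : exp (-(s • A)) * A = A * exp (-(s • A)) :=
      ((((Commute.refl A).smul_left s).neg_left).exp_left).eq
    rw [hg]
    simp only [mul_neg, cA]
    noncomm_ring
  rw [key t, sub_mul, mul_assoc, mul_assoc, my_exp_neg_mul, mul_one]

/-- the purely algebraic identity for the derivative computation. -/
lemma my_alg_id (e₁ e₂ e₃ i₁ i₂ q P₁ P₂ P₃ L : 𝒜)
    (hL : L = P₁ + P₂ + P₃)
    (h₂ : i₂ * e₂ = e₂ * P₃ - P₃ * e₂)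
    (h₁ : i₁ * e₁ = (P₂ + P₃) * e₁ - e₁ * (P₂ + P₃)) :
    q * (-L) * (e₁ * e₂ * e₃)
      + q * ((P₁ * e₁ * e₂ + e₁ * (P₂ * e₂)) * e₃ + e₁ * e₂ * (P₃ * e₃))
      = q * ((e₁ * i₂ - i₁ * e₁) * (e₂ * e₃)) := by
  have expand : (e₁ * i₂ - i₁ * e₁) * (e₂ * e₃)
      = e₁ * (i₂ * e₂) * e₃ - (i₁ * e₁) * (e₂ * e₃) := by noncomm_ring
  rw [expand, h₁, h₂, hL]
  noncomm_ring

end Aux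

/-- Under the second-order condition `[P₁,P₂] + [P₁,P₃] + [P₂,P₃] = 0`, with
`𝓛 = P₁ + P₂ + P₃`, `E(t) = exp(tP₁)exp(tP₂)exp(tP₃) − exp(t𝓛)` and
`W(τ) = exp(τP₁)·∫₀^τ exp(ηP₂)[P₂,P₃]exp(−ηP₂) dη
       − (∫₀^τ exp(ηP₁)[P₂,P₃]exp(−ηP₁) dη)·exp(τP₁)`,
one has `E(t) = ∫₀ᵗ exp((t−τ)𝓛)·W(τ)·exp(τP₂)exp(τP₃) dτ` for all `t ≥ 0`. -/
theorem E_via_W {𝒜 : Type*} [NormedRing 𝒜] [NormedAlgebra ℂ 𝒜] [CompleteSpace 𝒜]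
    (P₁ P₂ P₃ : 𝒜) (𝓛 : 𝒜) (h𝓛 : 𝓛 = P₁ + P₂ + P₃)
    (hcond : (P₁ * P₂ - P₂ * P₁) + (P₁ * P₃ - P₃ * P₁) + (P₂ * P₃ - P₃ * P₂) = 0)
    (W : ℝ → 𝒜)
    (hW : ∀ τ : ℝ, W τ =
        exp ((τ : ℂ) • P₁)
            * (∫ η in (0 : ℝ)..τ, exp ((η : ℂ) • P₂) * (P₂ * P₃ - P₃ * P₂)
                * exp (-((η : ℂ) • P₂)))
          - (∫ η in (0 : ℝ)..τ, exp ((η : ℂ) • P₁) * (P₂ * P₃ - P₃ * P₂)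
                * exp (-((η : ℂ) • P₁)))
              * exp ((τ : ℂ) • P₁)) :
    ∀ t : ℝ, 0 ≤ t →
      exp ((t : ℂ) • P₁) * exp ((t : ℂ) • P₂) * exp ((t : ℂ) • P₃) - exp ((t : ℂ) • 𝓛)
        = ∫ τ in (0 : ℝ)..t, exp (((t - τ : ℝ) : ℂ) • 𝓛) * W τ
            * exp ((τ : ℂ) • P₂) * exp ((τ : ℂ) • P₃) := by
  simp only [my_csmul] at hW ⊢
  set C : 𝒜 := P₂ * P₃ - P₃ * P₂ with hC
  set I₂ : ℝ → 𝒜 := fun τ => ∫ η in (0:ℝ)..τ, exp (η • P₂) * C * exp (-(η • P₂)) with hI₂def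
  set I₁ : ℝ → 𝒜 := fun τ => ∫ η in (0:ℝ)..τ, exp (η • P₁) * C * exp (-(η • P₁)) with hI₁def
  -- conjugation identities
  have hI₂ : ∀ τ : ℝ, I₂ τ * exp (τ • P₂) = exp (τ • P₂) * P₃ - P₃ * exp (τ • P₂) :=
    fun τ => my_conj_int P₂ P₃ τ
  have hBeq : P₁ * (-(P₂ + P₃)) - (-(P₂ + P₃)) * P₁ = C := by
    have h : P₁ * (-(P₂ + P₃)) - (-(P₂ + P₃)) * P₁ - C
        = -((P₁ * P₂ - P₂ * P₁) + (P₁ * P₃ - P₃ * P₁) + (P₂ * P₃ - P₃ * P₂)) := by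
      rw [hC]; noncomm_ring
    rw [hcond, neg_zero] at h
    exact sub_eq_zero.mp h
  have hI₁ : ∀ τ : ℝ, I₁ τ * exp (τ • P₁)
      = (P₂ + P₃) * exp (τ • P₁) - exp (τ • P₁) * (P₂ + P₃) := by
    intro τ
    have h := my_conj_int P₁ (-(P₂ + P₃)) τ
    simp only [hBeq] at h
    rw [hI₁def]
    rw [h]
    noncomm_ring
  -- the functions
  set d : ℝ → 𝒜 := fun τ => exp (-(τ • 𝓛))
      * (W τ * (exp (τ • P₂) * exp (τ • P₃))) with hd
  set F : ℝ → 𝒜 := fun τ => exp (-(τ • 𝓛))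
      * (exp (τ • P₁) * exp (τ • P₂) * exp (τ • P₃)) with hF
  set G : ℝ → 𝒜 := fun τ => ∫ s in (0:ℝ)..τ, d s with hG
  -- continuity
  have hI₂c : Continuous I₂ := by
    apply intervalIntegral.continuous_primitive
    intro a b
    exact (((my_exp_cont P₂).mul continuous_const).mul (my_exp_cont_neg P₂)).intervalIntegrable a b
  have hI₁c : Continuous I₁ := by
    apply intervalIntegral.continuous_primitive
    intro a b
    exact (((my_exp_cont P₁).mul continuous_const).mul (my_exp_cont_neg P₁)).intervalIntegrable a b
  have hWc : Continuous W := by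
    have : W = fun τ => exp (τ • P₁) * I₂ τ - I₁ τ * exp (τ • P₁) := funext hW
    rw [this]
    exact ((my_exp_cont P₁).mul hI₂c).sub (hI₁c.mul (my_exp_cont P₁))
  have hdc : Continuous d :=
    (my_exp_cont_neg 𝓛).mul (hWc.mul ((my_exp_cont P₂).mul (my_exp_cont P₃)))
  -- derivatives
  have hFd : ∀ τ : ℝ, HasDerivAt F (d τ) τ := by
    intro τ
    have hS := ((my_exp_deriv' P₁ τ).fun_mul (my_exp_deriv' P₂ τ)).fun_mul (my_exp_deriv' P₃ τ)
    have hFD := (my_exp_deriv_neg 𝓛 τ).fun_mul hS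
    have heq : exp (-(τ • 𝓛)) * -𝓛
          * (exp (τ • P₁) * exp (τ • P₂) * exp (τ • P₃))
        + exp (-(τ • 𝓛))
          * ((P₁ * exp (τ • P₁) * exp (τ • P₂)
              + exp (τ • P₁) * (P₂ * exp (τ • P₂))) * exp (τ • P₃)
            + exp (τ • P₁) * exp (τ • P₂) * (P₃ * exp (τ • P₃)))
        = d τ := by
      rw [hd]
      simp only [hW τ]
      exact my_alg_id (exp (τ • P₁)) (exp (τ • P₂)) (exp (τ • P₃)) (I₁ τ) (I₂ τ)
        (exp (-(τ • 𝓛))) P₁ P₂ P₃ 𝓛 h𝓛 (hI₂ τ) (hI₁ τ)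
    exact heq ▸ hFD
  have hGd : ∀ τ : ℝ, HasDerivAt (fun u => G u + 1) (d τ) τ := by
    intro τ
    simpa using ((hdc.integral_hasStrictDerivAt 0 τ).hasDerivAt.add_const (1 : 𝒜))
  have key : ∀ τ : ℝ, F τ = G τ + 1 := by
    refine my_eq_of_deriv hFd hGd ?_
    simp [hF, hG]
  -- conclude
  intro t _
  have hkey := congrArg (fun x => exp (t • 𝓛) * x) (key t)
  simp only [mul_add, mul_one, hF, ← mul_assoc, my_exp_mul_neg, one_mul] at hkey
  rw [hkey]
  have hcomm : ∀ τ : ℝ, exp (t • 𝓛) * d τ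
      = exp ((t - τ) • 𝓛) * W τ * exp (τ • P₂) * exp (τ • P₃) := by
    intro τ
    rw [hd]
    rw [← mul_assoc, my_exp_smul_sub]
    noncomm_ring
  have hmul : exp (t • 𝓛) * G t = ∫ τ in (0:ℝ)..t, exp (t • 𝓛) * d τ := by
    rw [hG]
    exact ((ContinuousLinearMap.mul ℝ 𝒜 (exp (t • 𝓛))).intervalIntegral_comp_comm
      (hdc.intervalIntegrable 0 t)).symm
  rw [add_sub_cancel_right, hmul]
  exact intervalIntegral.integral_congr (fun τ _ => hcomm τ)
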